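/- Let 1 < p < ∞ and define V_p(ξ) = (1+|ξ|²)^((p-2)/4) ξ for ξ ∈ ℝᵏ. Then there exists a constant c = c(k,p) > 0 such that for all ξ, η ∈ ℝᵏ with ξ ≠ η, c⁻¹ (1+|ξ|²+|η|²)^((p-2)/2) ≤ |V_p(ξ) - V_p(η)|² / |ξ-η|² ≤ c (1+|ξ|²+|η|²)^((p-2)/2). -/

import Mathlib

open Real

noncomputable def fV (p x : ℝ) : ℝ := (1 + x ^ 2) ^ ((p - 2) / 4) * x

lemma fV_hasDerivAt (p x : ℝ) :
    HasDerivAt (fV p) ((1 + x ^ 2) ^ ((p - 2) / 4 - 1) * (1 + p / 2 * x ^ 2)) x := by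
  have hpos : (0:ℝ) < 1 + x ^ 2 := by positivity
  have h1 : HasDerivAt (fun t : ℝ => 1 + t ^ 2) (2 * x) x := by
    simpa using (hasDerivAt_pow 2 x).const_add 1
  have h2 : HasDerivAt (fun t : ℝ => (1 + t ^ 2) ^ ((p - 2) / 4))
      (2 * x * ((p - 2) / 4) * (1 + x ^ 2) ^ ((p - 2) / 4 - 1)) x :=
    h1.rpow_const (Or.inl hpos.ne')
  have h3 := h2.mul (hasDerivAt_id x)
  have key : (1 + x ^ 2) ^ ((p - 2) / 4) = (1 + x ^ 2) ^ ((p - 2) / 4 - 1) * (1 + x ^ 2) := by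
    rw [← Real.rpow_add_one hpos.ne']
    norm_num
  refine h3.congr_deriv ?_
  simp only [id]
  rw [key]; ring

lemma fV_odd (p x : ℝ) : fV p (-x) = - fV p x := by
  simp [fV, neg_sq]

lemma fV_deriv_bounds (p : ℝ) (hp : 1 < p) (t : ℝ) :
    min 1 (p/2) * (1 + t^2) ^ ((p-2)/4) ≤ (1 + t^2) ^ ((p-2)/4 - 1) * (1 + p/2 * t^2) ∧
    (1 + t^2) ^ ((p-2)/4 - 1) * (1 + p/2 * t^2) ≤ max 1 (p/2) * (1 + t^2) ^ ((p-2)/4) := by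
  have hpos : (0:ℝ) < 1 + t ^ 2 := by positivity
  have hpow : (0:ℝ) < (1 + t^2) ^ ((p-2)/4 - 1) := Real.rpow_pos_of_pos hpos _
  have key : (1 + t ^ 2) ^ ((p - 2) / 4) = (1 + t ^ 2) ^ ((p - 2) / 4 - 1) * (1 + t ^ 2) := by
    rw [← Real.rpow_add_one hpos.ne']
    norm_num
  rw [key]
  constructor
  · rw [mul_comm (min 1 (p/2)) _, mul_assoc]
    apply mul_le_mul_of_nonneg_left _ hpow.le
    rcases min_cases 1 (p/2) with ⟨h, h'⟩ | ⟨h, h'⟩ <;> rw [h] <;> nlinarith [sq_nonneg t]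
  · rw [mul_comm (max 1 (p/2)) _, mul_assoc]
    apply mul_le_mul_of_nonneg_left _ hpow.le
    rcases max_cases 1 (p/2) with ⟨h, h'⟩ | ⟨h, h'⟩ <;> rw [h] <;> nlinarith [sq_nonneg t]

lemma fV_deriv_pos (p : ℝ) (hp : 1 < p) (t : ℝ) :
    0 < (1 + t^2) ^ ((p-2)/4 - 1) * (1 + p/2 * t^2) := by
  have hpos : (0:ℝ) < 1 + t ^ 2 := by positivity
  have hpow : (0:ℝ) < (1 + t^2) ^ ((p-2)/4 - 1) := Real.rpow_pos_of_pos hpos _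
  have : (0:ℝ) < 1 + p/2 * t^2 := by nlinarith [sq_nonneg t]
  positivity

lemma fV_strictMono (p : ℝ) (hp : 1 < p) : StrictMono (fV p) := by
  apply strictMono_of_deriv_pos
  intro t
  rw [(fV_hasDerivAt p t).deriv]
  exact fV_deriv_pos p hp t

lemma fV_mvt (p : ℝ) {a b : ℝ} (hab : a < b) :
    ∃ τ ∈ Set.Ioo a b,
      fV p b - fV p a = ((1 + τ^2) ^ ((p-2)/4 - 1) * (1 + p/2 * τ^2)) * (b - a) := by
  obtain ⟨τ, hτ, heq⟩ := exists_hasDerivAt_eq_slope (fV p)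
    (fun t => (1 + t^2) ^ ((p-2)/4 - 1) * (1 + p/2 * t^2)) hab
    (fun t _ => (fV_hasDerivAt p t).differentiableAt.continuousAt.continuousWithinAt)
    (fun t _ => fV_hasDerivAt p t)
  refine ⟨τ, hτ, ?_⟩
  rw [heq, div_mul_cancel₀]
  exact sub_ne_zero.mpr hab.ne'

set_option maxHeartbeats 2000000 in
lemma fV_key_sorted (p : ℝ) (hp : 1 < p) {x y : ℝ} (hyx : y < x) (hxy : -x ≤ y) :
    ((4 + max 1 (p/2) + 4/(min 1 (p/2))) * (8:ℝ) ^ |(p-2)/4|)⁻¹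
        * (1+x^2+y^2) ^ ((p-2)/4) * (x-y) ≤ fV p x - fV p y ∧
    fV p x - fV p y ≤ (4 + max 1 (p/2) + 4/(min 1 (p/2))) * (8:ℝ) ^ |(p-2)/4|
        * (1+x^2+y^2) ^ ((p-2)/4) * (x-y) := by
  set cL := min 1 (p/2) with hcLdef
  set cU := max 1 (p/2) with hcUdef
  set K := (8:ℝ) ^ |(p-2)/4| with hKdef
  set c := (4 + cU + 4/cL) * K with hcdef
  have hp2 : 0 < p/2 := by linarith
  have hcL : 0 < cL := lt_min one_pos hp2
  have hcU : 1 ≤ cU := le_max_left _ _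
  have hcL4 : 0 < 4/cL := by positivity
  have hK1 : 1 ≤ K := Real.one_le_rpow (by norm_num) (abs_nonneg _)
  have hK0 : 0 < K := by linarith
  have hA0 : 0 < 4 + cU + 4/cL := by linarith
  have hc0 : 0 < c := mul_pos hA0 hK0
  have hAK : 4 + cU + 4/cL ≤ c := by
    calc 4 + cU + 4/cL = (4 + cU + 4/cL) * 1 := by ring
      _ ≤ c := mul_le_mul_of_nonneg_left hK1 hA0.le
  have hx : 0 < x := by linarith
  have hy2 : y^2 ≤ x^2 := by nlinarith
  set M := 1+x^2+y^2 with hMdef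
  have hM : 0 < M := by positivity
  have hMβ : 0 < M ^ ((p-2)/4) := Real.rpow_pos_of_pos hM _
  have hxy0 : 0 < x - y := by linarith
  have hup : ∀ τ : ℝ, y < τ → τ < x → 1 + τ^2 ≤ M := by
    intro τ h1 h2
    have : τ^2 ≤ x^2 := by nlinarith
    rw [hMdef]; nlinarith [sq_nonneg y]
  have hdown : ∀ τ : ℝ, x/2 ≤ τ → τ ≤ x → M / 8 ≤ 1 + τ^2 := by
    intro τ h1 h2
    have hτ2 : x^2/4 ≤ τ^2 := by nlinarith
    rw [hMdef]; nlinarith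
  rcases le_or_gt 2 p with hP | hP
  · -- p ≥ 2, exponent nonneg
    have hβ : 0 ≤ (p-2)/4 := by linarith
    have hKE : K = (8:ℝ) ^ ((p-2)/4) := by rw [hKdef, abs_of_nonneg hβ]
    constructor
    · -- lower bound via quarter interval
      set m := (3*x + y)/4 with hmdef
      have hm1 : m < x := by rw [hmdef]; linarith
      have hm2 : y < m := by rw [hmdef]; linarith
      have hm3 : x/2 ≤ m := by rw [hmdef]; linarith
      obtain ⟨τ, hτ, heq⟩ := fV_mvt p hm1
      have hτ1 : x/2 ≤ τ := le_of_lt (lt_of_le_of_lt hm3 hτ.1)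
      have hT : M/8 ≤ 1 + τ^2 := hdown τ hτ1 hτ.2.le
      have hTβ : (M/8) ^ ((p-2)/4) ≤ (1+τ^2) ^ ((p-2)/4) :=
        Real.rpow_le_rpow (by positivity) hT hβ
      have hdiv : (M/8) ^ ((p-2)/4) = M ^ ((p-2)/4) / K := by
        rw [hKE, Real.div_rpow hM.le (by norm_num)]
      have hlow := (fV_deriv_bounds p hp τ).1
      have hmono : fV p y ≤ fV p m := (fV_strictMono p hp).monotone hm2.le
      have hxm : x - m = (x - y)/4 := by rw [hmdef]; ring
      have step1 : cL * (M ^ ((p-2)/4) / K) * ((x-y)/4) ≤ fV p x - fV p m := by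
        rw [heq, hxm]
        apply mul_le_mul_of_nonneg_right _ (by linarith)
        calc cL * (M ^ ((p-2)/4) / K) ≤ cL * (1+τ^2)^((p-2)/4) := by
              apply mul_le_mul_of_nonneg_left _ hcL.le
              rw [← hdiv]; exact hTβ
          _ ≤ _ := hlow
      have hconst : c⁻¹ ≤ cL/(4*K) := by
        rw [inv_le_comm₀ hc0 (by positivity), inv_div, div_le_iff₀ hcL]
        have h4 : cL * (4/cL) = 4 := by field_simp
        have h5 : 4 ≤ (4 + cU + 4/cL) * cL := by nlinarith
        calc 4*K ≤ ((4 + cU + 4/cL) * cL) * K := mul_le_mul_of_nonneg_right h5 hK0.le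
          _ = c * cL := by rw [hcdef]; ring
      calc c⁻¹ * M^((p-2)/4) * (x-y)
          ≤ (cL/(4*K)) * M^((p-2)/4) * (x-y) :=
            mul_le_mul_of_nonneg_right (mul_le_mul_of_nonneg_right hconst hMβ.le) hxy0.le
        _ = cL * (M^((p-2)/4)/K) * ((x-y)/4) := by ring
        _ ≤ fV p x - fV p m := step1
        _ ≤ fV p x - fV p y := by linarith
    · -- upper bound
      obtain ⟨τ, hτ, heq⟩ := fV_mvt p hyx
      have hT : 1+τ^2 ≤ M := hup τ hτ.1 hτ.2
      have hTβ : (1+τ^2)^((p-2)/4) ≤ M^((p-2)/4) :=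
        Real.rpow_le_rpow (by positivity) hT hβ
      have hhi := (fV_deriv_bounds p hp τ).2
      have hcUc : cU ≤ c := le_trans (by linarith) hAK
      rw [heq]
      calc (1+τ^2)^((p-2)/4-1) * (1+p/2*τ^2) * (x-y)
          ≤ cU * M^((p-2)/4) * (x - y) := by
            apply mul_le_mul_of_nonneg_right _ hxy0.le
            exact le_trans hhi (mul_le_mul_of_nonneg_left hTβ (by linarith))
        _ ≤ c * M^((p-2)/4) * (x-y) :=
            mul_le_mul_of_nonneg_right (mul_le_mul_of_nonneg_right hcUc hMβ.le) hxy0.le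
  · -- p < 2, exponent negative
    have hβ : (p-2)/4 ≤ 0 := by linarith
    have hKE : K = (8:ℝ) ^ (-((p-2)/4)) := by
      rw [hKdef, abs_of_nonpos hβ]
    constructor
    · -- lower bound
      obtain ⟨τ, hτ, heq⟩ := fV_mvt p hyx
      have hT : 1+τ^2 ≤ M := hup τ hτ.1 hτ.2
      have hTβ : M^((p-2)/4) ≤ (1+τ^2)^((p-2)/4) :=
        Real.rpow_le_rpow_of_nonpos (by positivity) hT hβ
      have hlow := (fV_deriv_bounds p hp τ).1
      have hconst : c⁻¹ ≤ cL := by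
        rw [inv_le_comm₀ hc0 hcL, inv_eq_one_div]
        have h14 : 1/cL ≤ 4/cL := by gcongr <;> norm_num
        linarith
      rw [heq]
      calc c⁻¹ * M^((p-2)/4) * (x-y)
          ≤ cL * M^((p-2)/4) * (x-y) :=
            mul_le_mul_of_nonneg_right (mul_le_mul_of_nonneg_right hconst hMβ.le) hxy0.le
        _ ≤ (1+τ^2)^((p-2)/4-1) * (1+p/2*τ^2) * (x-y) := by
            apply mul_le_mul_of_nonneg_right _ hxy0.le
            exact le_trans (mul_le_mul_of_nonneg_left hTβ hcL.le) hlow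
    · -- upper bound, two subcases
      have hdivK : (M/8) ^ ((p-2)/4) = M ^ ((p-2)/4) * K := by
        rw [hKE, Real.div_rpow hM.le (by norm_num), Real.rpow_neg (by norm_num),
          div_eq_mul_inv]
      rcases lt_or_ge (x - y) (x/2) with hc2 | hc2
      · -- close case : y > x/2
        have hyhalf : x/2 < y := by linarith
        obtain ⟨τ, hτ, heq⟩ := fV_mvt p hyx
        have hT : M/8 ≤ 1+τ^2 := hdown τ (by linarith [hτ.1]) hτ.2.le
        have hTβ : (1+τ^2)^((p-2)/4) ≤ (M/8)^((p-2)/4) :=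
          Real.rpow_le_rpow_of_nonpos (by positivity) hT hβ
        have hhi := (fV_deriv_bounds p hp τ).2
        rw [heq]
        calc (1+τ^2)^((p-2)/4-1) * (1+p/2*τ^2) * (x-y)
            ≤ cU * (M^((p-2)/4) * K) * (x-y) := by
              apply mul_le_mul_of_nonneg_right _ hxy0.le
              refine le_trans hhi (mul_le_mul_of_nonneg_left ?_ (by linarith))
              rw [← hdivK]; exact hTβ
          _ = (cU*K) * M^((p-2)/4) * (x-y) := by ring
          _ ≤ c * M^((p-2)/4) * (x-y) := by
              have hcc : cU * K ≤ c := by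
                rw [hcdef]
                apply mul_le_mul_of_nonneg_right _ hK0.le
                linarith
              exact mul_le_mul_of_nonneg_right (mul_le_mul_of_nonneg_right hcc hMβ.le) hxy0.le
      · -- far case : x - y ≥ x/2
        have h2f : fV p x - fV p y ≤ 2 * ((1+x^2)^((p-2)/4) * x) := by
          have h1 : fV p (-x) ≤ fV p y := (fV_strictMono p hp).monotone hxy
          rw [fV_odd] at h1
          have : fV p x = (1+x^2)^((p-2)/4) * x := rfl
          linarith
        have hM2 : M/2 ≤ 1+x^2 := by rw [hMdef]; nlinarith
        have hx2β : (1+x^2)^((p-2)/4) ≤ (M/2)^((p-2)/4) :=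
          Real.rpow_le_rpow_of_nonpos (by positivity) hM2 hβ
        have h28 : (M/2)^((p-2)/4) ≤ (M/8)^((p-2)/4) :=
          Real.rpow_le_rpow_of_nonpos (by positivity) (by linarith) hβ
        have hxx : x ≤ 2*(x-y) := by linarith
        have hfinal : 2 * ((1+x^2)^((p-2)/4) * x) ≤ 4 * (M^((p-2)/4) * K) * (x-y) := by
          have hb : (1+x^2)^((p-2)/4) ≤ M^((p-2)/4) * K := by
            rw [← hdivK]; exact le_trans hx2β h28
          have hxp : 0 < (1+x^2)^((p-2)/4) := Real.rpow_pos_of_pos (by positivity) _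
          nlinarith [mul_le_mul hb hxx hx.le (by positivity : (0:ℝ) ≤ M^((p-2)/4) * K)]
        have hcc : 4 * K ≤ c := by
          rw [hcdef]
          apply mul_le_mul_of_nonneg_right _ hK0.le
          linarith
        calc fV p x - fV p y ≤ 4 * (M^((p-2)/4) * K) * (x-y) := le_trans h2f hfinal
          _ = (4*K) * M^((p-2)/4) * (x-y) := by ring
          _ ≤ c * M^((p-2)/4) * (x-y) :=
            mul_le_mul_of_nonneg_right (mul_le_mul_of_nonneg_right hcc hMβ.le) hxy0.le

lemma fV_key (p : ℝ) (hp : 1 < p) : ∃ c : ℝ, 0 < c ∧ ∀ x y : ℝ, x ≠ y →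
    c⁻¹ * (1+x^2+y^2) ^ ((p-2)/4) * |x-y| ≤ |fV p x - fV p y| ∧
    |fV p x - fV p y| ≤ c * (1+x^2+y^2) ^ ((p-2)/4) * |x-y| := by
  have hcL : 0 < min 1 (p/2) := lt_min one_pos (by linarith)
  have hcU : (1:ℝ) ≤ max 1 (p/2) := le_max_left _ _
  refine ⟨(4 + max 1 (p/2) + 4/(min 1 (p/2))) * (8:ℝ) ^ |(p-2)/4|, by positivity, ?_⟩
  intro x y hne
  rcases lt_or_gt_of_ne hne with hlt | hgt
  · -- x < y
    have habs1 : |fV p x - fV p y| = fV p y - fV p x := by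
      rw [abs_sub_comm, abs_of_pos (sub_pos.mpr ((fV_strictMono p hp) hlt))]
    have habs2 : |x - y| = y - x := by
      rw [abs_sub_comm, abs_of_pos (sub_pos.mpr hlt)]
    rcases le_or_gt (-y) x with hc | hc
    · have H := fV_key_sorted p hp hlt hc
      have hMM : (1:ℝ)+y^2+x^2 = 1+x^2+y^2 := by ring
      rw [hMM] at H
      rw [habs1, habs2]
      exact H
    · have H := fV_key_sorted p hp (show -y < -x by linarith)
        (show -(-x) ≤ -y by linarith)
      rw [fV_odd, fV_odd] at H
      have e1 : (1:ℝ)+(-x)^2+(-y)^2 = 1+x^2+y^2 := by ring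
      have e2 : -x - -y = y - x := by ring
      rw [e1, e2] at H
      rw [habs1, habs2]
      constructor
      · linarith [H.1]
      · linarith [H.2]
  · -- y < x
    have habs1 : |fV p x - fV p y| = fV p x - fV p y := by
      rw [abs_of_pos (sub_pos.mpr ((fV_strictMono p hp) hgt))]
    have habs2 : |x - y| = x - y := by
      rw [abs_of_pos (sub_pos.mpr hgt)]
    rcases le_or_gt (-x) y with hc | hc
    · have H := fV_key_sorted p hp hgt hc
      rw [habs1, habs2]
      exact H
    · have H := fV_key_sorted p hp (show -x < -y by linarith)
        (show -(-y) ≤ -x by linarith)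
      rw [fV_odd, fV_odd] at H
      have e1 : (1:ℝ)+(-y)^2+(-x)^2 = 1+x^2+y^2 := by ring
      have e2 : -y - -x = x - y := by ring
      rw [e1, e2] at H
      rw [habs1, habs2]
      constructor
      · linarith [H.1]
      · linarith [H.2]

lemma sq_le_of_le_abs {L X : ℝ} (hL : 0 ≤ L) (h : L ≤ |X|) : L^2 ≤ X^2 := by
  have h2 := mul_self_le_mul_self hL h
  rw [abs_mul_abs_self] at h2
  calc L^2 = L*L := sq L
    _ ≤ X*X := h2
    _ = X^2 := (sq X).symm

lemma sq_le_of_abs_le {L X : ℝ} (h : |X| ≤ L) : X^2 ≤ L^2 := by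
  have h2 := mul_self_le_mul_self (abs_nonneg X) h
  rw [abs_mul_abs_self] at h2
  calc X^2 = X*X := sq X
    _ ≤ L*L := h2
    _ = L^2 := (sq L).symm

set_option maxHeartbeats 2000000 in
/-- Lemma 2.1 (Giusti 8.3): comparison estimates for the auxiliary function
`V_p(ξ) = (1+|ξ|²)^((p-2)/4) ξ`. -/
theorem Vp_comparison (k : ℕ) (p : ℝ) (hp₁ : 1 < p) :
    ∃ c : ℝ, 0 < c ∧ ∀ ξ η : EuclideanSpace ℝ (Fin k), ξ ≠ η →
      c⁻¹ * (1 + ‖ξ‖ ^ 2 + ‖η‖ ^ 2) ^ ((p - 2) / 2)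
        ≤ ‖((1 + ‖ξ‖ ^ 2) ^ ((p - 2) / 4)) • ξ - ((1 + ‖η‖ ^ 2) ^ ((p - 2) / 4)) • η‖ ^ 2
            / ‖ξ - η‖ ^ 2 ∧
      ‖((1 + ‖ξ‖ ^ 2) ^ ((p - 2) / 4)) • ξ - ((1 + ‖η‖ ^ 2) ^ ((p - 2) / 4)) • η‖ ^ 2
            / ‖ξ - η‖ ^ 2
        ≤ c * (1 + ‖ξ‖ ^ 2 + ‖η‖ ^ 2) ^ ((p - 2) / 2) := by
  obtain ⟨c₁, hc₁, hkey⟩ := fV_key p hp₁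
  refine ⟨c₁^2, by positivity, ?_⟩
  intro ξ η hne
  set a := ‖ξ‖ with hadef
  set b := ‖η‖ with hbdef
  set s := (inner ℝ ξ η : ℝ) with hsdef
  set A := (1+a^2) ^ ((p-2)/4) with hAdef
  set B := (1+b^2) ^ ((p-2)/4) with hBdef
  have ha0 : 0 ≤ a := norm_nonneg _
  have hb0 : 0 ≤ b := norm_nonneg _
  have hA : 0 < A := Real.rpow_pos_of_pos (by positivity) _
  have hB : 0 < B := Real.rpow_pos_of_pos (by positivity) _
  have hDn : ξ - η ≠ 0 := sub_ne_zero.mpr hne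
  have hD : 0 < ‖ξ - η‖^2 := by
    have := norm_pos_iff.mpr hDn
    positivity
  have eD : ‖ξ - η‖^2 = a^2 + b^2 - 2*s := by
    rw [norm_sub_sq_real]; ring
  have eN : ‖A • ξ - B • η‖^2 = A^2*a^2 + B^2*b^2 - 2*(A*B)*s := by
    rw [norm_sub_sq_real, real_inner_smul_left, real_inner_smul_right,
      norm_smul, norm_smul, Real.norm_eq_abs, Real.norm_eq_abs,
      abs_of_pos hA, abs_of_pos hB]
    ring
  have hs : |s| ≤ a*b := abs_real_inner_le_norm ξ η
  set M := 1+a^2+b^2 with hMdef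
  have hM : 0 < M := by positivity
  have hM2 : (M^((p-2)/4))^2 = M^((p-2)/2) := by
    rw [← Real.rpow_natCast (M ^ ((p-2)/4)) 2, ← Real.rpow_mul hM.le]
    norm_num
    congr 1
    ring
  have efa : fV p a = A*a := rfl
  have efb : fV p b = B*b := rfl
  have efb' : fV p (-b) = -(B*b) := by rw [fV_odd, efb]
  have hab' : a ≠ -b := by
    intro h
    have ha : a = 0 := le_antisymm (by linarith) ha0
    have hb : b = 0 := by linarith
    exact hne (by rw [norm_eq_zero.mp ha, norm_eq_zero.mp hb])
  have hMsum : (1:ℝ)+a^2+(-b)^2 = M := by rw [hMdef]; ring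
  -- endpoint inequalities (lower)
  have E1 : c₁⁻¹^2 * M^((p-2)/2) * (a-b)^2 ≤ (A*a - B*b)^2 := by
    rcases eq_or_ne a b with hab | hab
    · calc c₁⁻¹^2 * M^((p-2)/2) * (a-b)^2 = 0 := by rw [hab]; ring
        _ ≤ (A*a - B*b)^2 := sq_nonneg _
    · have h := (hkey a b hab).1
      rw [efa, efb, ← hMdef] at h
      have hL0 : 0 ≤ c₁⁻¹ * M^((p-2)/4) * |a-b| := by positivity
      have := sq_le_of_le_abs hL0 h
      calc c₁⁻¹^2 * M^((p-2)/2) * (a-b)^2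
          = (c₁⁻¹ * M^((p-2)/4) * |a-b|)^2 := by
            rw [mul_pow, mul_pow, sq_abs, hM2]
        _ ≤ (A*a - B*b)^2 := this
  have E2 : c₁⁻¹^2 * M^((p-2)/2) * (a+b)^2 ≤ (A*a + B*b)^2 := by
    have h := (hkey a (-b) hab').1
    rw [efa, efb', hMsum] at h
    have h' : c₁⁻¹ * M^((p-2)/4) * |a+b| ≤ |A*a + B*b| := by
      have e3 : a - -b = a + b := by ring
      have e4 : A*a - -(B*b) = A*a + B*b := by ring
      rw [e3, e4] at h
      exact h
    have hL0 : 0 ≤ c₁⁻¹ * M^((p-2)/4) * |a+b| := by positivity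
    have := sq_le_of_le_abs hL0 h'
    calc c₁⁻¹^2 * M^((p-2)/2) * (a+b)^2
        = (c₁⁻¹ * M^((p-2)/4) * |a+b|)^2 := by
          rw [mul_pow, mul_pow, sq_abs, hM2]
      _ ≤ (A*a + B*b)^2 := this
  -- endpoint inequalities (upper)
  have U1 : (A*a - B*b)^2 ≤ c₁^2 * M^((p-2)/2) * (a-b)^2 := by
    rcases eq_or_ne a b with hab | hab
    · have hAB : A = B := by rw [hAdef, hBdef, hab]
      calc (A*a - B*b)^2 = 0 := by rw [hab, hAB]; ring
        _ ≤ c₁^2 * M^((p-2)/2) * (a-b)^2 := by positivity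
    · have h := (hkey a b hab).2
      rw [efa, efb, ← hMdef] at h
      have := sq_le_of_abs_le h
      calc (A*a - B*b)^2 ≤ (c₁ * M^((p-2)/4) * |a-b|)^2 := this
        _ = c₁^2 * M^((p-2)/2) * (a-b)^2 := by
          rw [mul_pow, mul_pow, sq_abs, hM2]
  have U2 : (A*a + B*b)^2 ≤ c₁^2 * M^((p-2)/2) * (a+b)^2 := by
    have h := (hkey a (-b) hab').2
    rw [efa, efb', hMsum] at h
    have h' : |A*a + B*b| ≤ c₁ * M^((p-2)/4) * |a+b| := by
      have e3 : a - -b = a + b := by ring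
      have e4 : A*a - -(B*b) = A*a + B*b := by ring
      rw [e3, e4] at h
      exact h
    have := sq_le_of_abs_le h'
    calc (A*a + B*b)^2 ≤ (c₁ * M^((p-2)/4) * |a+b|)^2 := this
      _ = c₁^2 * M^((p-2)/2) * (a+b)^2 := by
        rw [mul_pow, mul_pow, sq_abs, hM2]
  -- combine via linearity in s
  have hinv : (c₁^2)⁻¹ = c₁⁻¹^2 := (inv_pow c₁ 2).symm
  have habs := abs_le.mp hs
  have hMp : 0 < M^((p-2)/2) := Real.rpow_pos_of_pos hM _
  constructor
  · rw [le_div_iff₀ hD, eD, eN, hinv]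
    rcases eq_or_lt_of_le (mul_nonneg ha0 hb0) with hab0 | hab0
    · have hs0 : s = 0 := by
        have h1 := abs_le.mp hs
        have : |s| ≤ 0 := by rw [← hab0] at hs; exact hs
        exact abs_eq_zero.mp (le_antisymm this (abs_nonneg s))
      rw [hs0]
      have hLab : (c₁⁻¹^2 * M^((p-2)/2)) * (a*b) = 0 := by rw [← hab0]; ring
      have hABab : (A*B) * (a*b) = 0 := by rw [← hab0]; ring
      have key : A^2*a^2+B^2*b^2 - c₁⁻¹^2 * M^((p-2)/2)*(a^2+b^2)
          = ((A*a-B*b)^2 - c₁⁻¹^2 * M^((p-2)/2)*(a-b)^2)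
            + 2*((A*B)*(a*b)) - 2*((c₁⁻¹^2 * M^((p-2)/2))*(a*b)) := by ring
      linarith [E1, hLab, hABab, key]
    · have hP1 : 0 ≤ (a*b+s) * ((A*a-B*b)^2 - c₁⁻¹^2 * M^((p-2)/2)*(a-b)^2) :=
        mul_nonneg (by linarith [habs.1]) (by linarith [E1])
      have hP2 : 0 ≤ (a*b-s) * ((A*a+B*b)^2 - c₁⁻¹^2 * M^((p-2)/2)*(a+b)^2) :=
        mul_nonneg (by linarith [habs.2]) (by linarith [E2])
      have key : (A^2*a^2+B^2*b^2-2*(A*B)*s - c₁⁻¹^2 * M^((p-2)/2)*(a^2+b^2-2*s)) * (2*(a*b))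
          = (a*b+s) * ((A*a-B*b)^2 - c₁⁻¹^2 * M^((p-2)/2)*(a-b)^2)
            + (a*b-s) * ((A*a+B*b)^2 - c₁⁻¹^2 * M^((p-2)/2)*(a+b)^2) := by ring
      have h0 : 0 ≤ (A^2*a^2+B^2*b^2-2*(A*B)*s
          - c₁⁻¹^2 * M^((p-2)/2)*(a^2+b^2-2*s)) * (2*(a*b)) := by
        rw [key]; exact add_nonneg hP1 hP2
      have h2ab : 0 < 2*(a*b) := by linarith
      have := (mul_nonneg_iff_of_pos_right h2ab).mp h0
      linarith
  · rw [div_le_iff₀ hD, eD, eN]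
    rcases eq_or_lt_of_le (mul_nonneg ha0 hb0) with hab0 | hab0
    · have hs0 : s = 0 := by
        have : |s| ≤ 0 := by rw [← hab0] at hs; exact hs
        exact abs_eq_zero.mp (le_antisymm this (abs_nonneg s))
      rw [hs0]
      have hLab : (c₁^2 * M^((p-2)/2)) * (a*b) = 0 := by rw [← hab0]; ring
      have hABab : (A*B) * (a*b) = 0 := by rw [← hab0]; ring
      have key : c₁^2 * M^((p-2)/2)*(a^2+b^2) - (A^2*a^2+B^2*b^2)
          = (c₁^2 * M^((p-2)/2)*(a-b)^2 - (A*a-B*b)^2)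
            - 2*((A*B)*(a*b)) + 2*((c₁^2 * M^((p-2)/2))*(a*b)) := by ring
      linarith [U1, hLab, hABab, key]
    · have hP1 : 0 ≤ (a*b+s) * (c₁^2 * M^((p-2)/2)*(a-b)^2 - (A*a-B*b)^2) :=
        mul_nonneg (by linarith [habs.1]) (by linarith [U1])
      have hP2 : 0 ≤ (a*b-s) * (c₁^2 * M^((p-2)/2)*(a+b)^2 - (A*a+B*b)^2) :=
        mul_nonneg (by linarith [habs.2]) (by linarith [U2])
      have key : (c₁^2 * M^((p-2)/2)*(a^2+b^2-2*s) - (A^2*a^2+B^2*b^2-2*(A*B)*s)) * (2*(a*b))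
          = (a*b+s) * (c₁^2 * M^((p-2)/2)*(a-b)^2 - (A*a-B*b)^2)
            + (a*b-s) * (c₁^2 * M^((p-2)/2)*(a+b)^2 - (A*a+B*b)^2) := by ring
      have h0 : 0 ≤ (c₁^2 * M^((p-2)/2)*(a^2+b^2-2*s)
          - (A^2*a^2+B^2*b^2-2*(A*B)*s)) * (2*(a*b)) := by
        rw [key]; exact add_nonneg hP1 hP2
      have h2ab : 0 < 2*(a*b) := by linarith
      have := (mul_nonneg_iff_of_pos_right h2ab).mp h0
      linarith
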